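/- Let F be an r-uniform hypergraph that covers pairs with v(F) ≤ t, and suppose π(F) < r!·λ(K_t^(r)) = t^(−r)·C(t,r)·r!. Let G be an r-graph that covers pairs, does not contain F^{+(t+1)} as a subgraph (where F^{+(t+1)} is F with isolated vertices added to reach t+1 vertices), and satisfies λ(G) > max{λ*, π(F)/r!} where λ* is the maximum Lagrangian over all r-graphs on at most t vertices not isomorphic to K_t^(r). Then G is isomorphic to K_t^(r). -/

import Mathlib

open Finset Filter

def IsProb {V : Type*} [Fintype V] (μ : V → ℝ) : Prop :=
  (∀ v, 0 ≤ μ v) ∧ ∑ v, μ v = 1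

def hDen {V : Type*} (F : Finset (Finset V)) (μ : V → ℝ) : ℝ :=
  ∑ E ∈ F, ∏ v ∈ E, μ v

noncomputable def lagrangian {V : Type*} [Fintype V] (F : Finset (Finset V)) : ℝ :=
  sSup {x : ℝ | ∃ μ : V → ℝ, IsProb μ ∧ x = hDen F μ}

def CoversPairs {V : Type*} [Fintype V] (G : Finset (Finset V)) : Prop :=
  ∀ u v : V, u ≠ v → ∃ E ∈ G, u ∈ E ∧ v ∈ E

def ContainsHCopy {U W : Type*} [DecidableEq W] (F : Finset (Finset U))
    (Gn : Finset (Finset W)) : Prop :=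
  ∃ f : U ↪ W, ∀ E ∈ F, E.image f ∈ Gn

noncomputable def exNum {U : Type*} (r : ℕ) (F : Finset (Finset U)) (n : ℕ) : ℕ :=
  sSup {m : ℕ | ∃ Gn : Finset (Finset (Fin n)), (∀ E ∈ Gn, E.card = r) ∧
    ¬ ContainsHCopy F Gn ∧ m = Gn.card}

/-- The maximum Lagrangian over `r`-graphs on at most `t` vertices that are not
isomorphic to `K_t^(r)`. -/
noncomputable def lamStar (t r : ℕ) : ℝ :=
  sSup {x : ℝ | ∃ m, m ≤ t ∧ ∃ H : Finset (Finset (Fin m)),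
    (∀ E ∈ H, E.card = r) ∧
    ¬ (∃ e : Fin m ≃ Fin t, ∀ E : Finset (Fin m),
        E ∈ H ↔ E.image e ∈ ((Finset.univ : Finset (Fin t)).powersetCard r)) ∧
    x = lagrangian H}

lemma IsProb.le_one {V : Type*} [Fintype V] {μ : V → ℝ} (h : IsProb μ) (v : V) : μ v ≤ 1 := by
  rcases h with ⟨h0, h1⟩
  calc μ v ≤ ∑ w, μ w := Finset.single_le_sum (fun w _ => h0 w) (mem_univ v)
  _ = 1 := h1

lemma hDen_le_card {V : Type*} [Fintype V] {G : Finset (Finset V)} {μ : V → ℝ}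
    (h : IsProb μ) : hDen G μ ≤ G.card := by
  calc hDen G μ ≤ ∑ E ∈ G, (1:ℝ) :=
        Finset.sum_le_sum fun E _ => Finset.prod_le_one (fun v _ => h.1 v) (fun v _ => h.le_one v)
  _ = G.card := by simp

lemma lagrangian_le {V : Type*} [Fintype V] {G : Finset (Finset V)} {c : ℝ}
    (hc : 0 ≤ c) (h : ∀ μ : V → ℝ, IsProb μ → hDen G μ ≤ c) : lagrangian G ≤ c :=
  Real.sSup_le (by rintro x ⟨μ, hμ, rfl⟩; exact h μ hμ) hc

lemma lagrangian_le_card {V : Type*} [Fintype V] (G : Finset (Finset V)) :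
    lagrangian G ≤ G.card :=
  lagrangian_le (by positivity) fun μ hμ => hDen_le_card hμ

lemma hDen_image {V W : Type*} [Fintype V] [Fintype W] [DecidableEq V] [DecidableEq W]
    (e : V ≃ W) (G : Finset (Finset V)) (μ : W → ℝ) :
    hDen (G.image (Finset.image e)) μ = hDen G (μ ∘ e) := by
  unfold hDen
  rw [Finset.sum_image (fun E1 _ E2 _ h => Finset.image_injective e.injective h)]
  exact Finset.sum_congr rfl fun E _ => Finset.prod_image fun a _ b _ h => e.injective h

lemma isProb_comp {V W : Type*} [Fintype V] [Fintype W] (e : V ≃ W) (μ : W → ℝ)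
    (h : IsProb μ) : IsProb (μ ∘ e) := by
  refine ⟨fun v => h.1 _, ?_⟩
  rw [← h.2]
  exact Fintype.sum_equiv e _ _ fun v => rfl

/-- transfer of `lagrangian` along an equivalence -/
lemma lagrangian_image {V W : Type*} [Fintype V] [Fintype W] [DecidableEq V] [DecidableEq W]
    (e : V ≃ W) (G : Finset (Finset V)) :
    lagrangian (G.image (Finset.image e)) = lagrangian G := by
  unfold lagrangian
  congr 1
  ext x
  constructor
  · rintro ⟨μ, hμ, rfl⟩
    exact ⟨μ ∘ e, isProb_comp e μ hμ, hDen_image e G μ⟩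
  · rintro ⟨μ, hμ, rfl⟩
    refine ⟨μ ∘ e.symm, isProb_comp e.symm μ hμ, ?_⟩
    rw [hDen_image e G]
    exact Finset.sum_congr rfl fun E _ => Finset.prod_congr rfl fun v _ => by simp

lemma caseA {V : Type*} [Fintype V] [DecidableEq V] (t r : ℕ)
    (G : Finset (Finset V)) (hGcard : ∀ E ∈ G, E.card = r) (hV : Fintype.card V ≤ t)
    (hlam : lamStar t r < lagrangian G) :
    ∃ e : V ≃ Fin t, ∀ E : Finset V,
      E ∈ G ↔ E.image e ∈ ((Finset.univ : Finset (Fin t)).powersetCard r) := by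
  by_contra hno
  set m := Fintype.card V with hm
  set e0 : V ≃ Fin m := Fintype.equivFin V with he0
  set H := G.image (Finset.image e0) with hH
  have hGH : ∀ E : Finset V, E ∈ G ↔ E.image e0 ∈ H := by
    intro E
    constructor
    · exact fun h => Finset.mem_image_of_mem _ h
    · intro h
      rcases Finset.mem_image.1 h with ⟨E', hE', hEE⟩
      rwa [← Finset.image_injective e0.injective hEE]
  have hmem : lagrangian G ∈ {x : ℝ | ∃ m, m ≤ t ∧ ∃ H : Finset (Finset (Fin m)),
      (∀ E ∈ H, E.card = r) ∧
      ¬ (∃ e : Fin m ≃ Fin t, ∀ E : Finset (Fin m),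
          E ∈ H ↔ E.image e ∈ ((Finset.univ : Finset (Fin t)).powersetCard r)) ∧
      x = lagrangian H} := by
    refine ⟨m, hV, H, ?_, ?_, (lagrangian_image e0 G).symm⟩
    · intro E' hE'
      rcases Finset.mem_image.1 hE' with ⟨E, hE, rfl⟩
      rw [Finset.card_image_of_injective _ e0.injective]
      exact hGcard E hE
    · rintro ⟨e, he⟩
      refine hno ⟨e0.trans e, fun E => ?_⟩
      rw [hGH E, he (E.image e0), Finset.image_image, Equiv.coe_trans]
  have hbdd : BddAbove {x : ℝ | ∃ m, m ≤ t ∧ ∃ H : Finset (Finset (Fin m)),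
      (∀ E ∈ H, E.card = r) ∧
      ¬ (∃ e : Fin m ≃ Fin t, ∀ E : Finset (Fin m),
          E ∈ H ↔ E.image e ∈ ((Finset.univ : Finset (Fin t)).powersetCard r)) ∧
      x = lagrangian H} := by
    refine ⟨(2:ℝ)^t, ?_⟩
    rintro x ⟨m', hm', H', _, _, rfl⟩
    refine (lagrangian_le_card H').trans ?_
    have h1 : H'.card ≤ 2^t := by
      calc H'.card ≤ Fintype.card (Finset (Fin m')) := Finset.card_le_univ H'
      _ = 2^m' := by simp [Fintype.card_finset]
      _ ≤ 2^t := Nat.pow_le_pow_right (by norm_num) hm'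
    calc (H'.card : ℝ) ≤ ((2^t : ℕ) : ℝ) := by exact_mod_cast h1
    _ = (2:ℝ)^t := by push_cast; ring
  exact absurd (le_csSup hbdd hmem) (not_le.2 hlam)

lemma extend_embedding {V U : Type*} [Fintype V] [DecidableEq V] [Fintype U] [DecidableEq U]
    (t : ℕ) (hU : Fintype.card U ≤ t) (hV : t + 1 ≤ Fintype.card V)
    (F : Finset (Finset U)) (G : Finset (Finset V))
    (φ : U ↪ V) (hφ : ∀ E ∈ F, E.image φ ∈ G) :
    ContainsHCopy (F.image (Finset.image (Sum.inl : U → U ⊕ Fin (t + 1 - Fintype.card U)))) G := by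
  classical
  set k := t + 1 - Fintype.card U with hk
  set s : Finset V := Finset.univ \ Finset.univ.image φ with hs
  have hcard : Fintype.card (Fin k) ≤ s.card := by
    have h1 : s.card = Fintype.card V - Fintype.card U := by
      rw [hs, Finset.card_sdiff_of_subset (Finset.subset_univ _),
        Finset.card_image_of_injective _ φ.injective]
      simp
    rw [Fintype.card_fin, h1, hk]
    exact Nat.sub_le_sub_right hV _
  obtain ⟨ψ, hψ⟩ := Function.Embedding.exists_of_card_le_finset hcard
  have hinj : Function.Injective (Sum.elim φ ψ : U ⊕ Fin k → V) := by
    intro x y h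
    have hmemψ : ∀ i : Fin k, (ψ i) ∉ Finset.univ.image φ := by
      intro i hi
      have := hψ (Set.mem_range_self i)
      rw [hs] at this
      simp only [Finset.coe_sdiff, Set.mem_diff] at this
      exact this.2 (by exact_mod_cast hi)
    cases x with
    | inl u => cases y with
      | inl u' => simp only [Sum.elim_inl] at h; exact congrArg Sum.inl (φ.injective h)
      | inr i => simp only [Sum.elim_inl, Sum.elim_inr] at h
                 exact absurd (Finset.mem_image_of_mem φ (Finset.mem_univ u)) (h ▸ hmemψ i)
    | inr i => cases y with
      | inl u => simp only [Sum.elim_inl, Sum.elim_inr] at h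
                 exact absurd (Finset.mem_image_of_mem φ (Finset.mem_univ u)) (h.symm ▸ hmemψ i)
      | inr i' => simp only [Sum.elim_inr] at h; exact congrArg Sum.inr (ψ.injective h)
  refine ⟨⟨Sum.elim φ ψ, hinj⟩, ?_⟩
  intro E' hE'
  rcases Finset.mem_image.1 hE' with ⟨E, hE, rfl⟩
  rw [Finset.image_image]
  convert hφ E hE using 2
  rfl

lemma card_filter_fin_lt {n m : ℕ} (h : m ≤ n) :
    ((Finset.univ : Finset (Fin n)).filter (fun i : Fin n => (i:ℕ) < m)).card = m := by
  have he : (Finset.univ : Finset (Fin n)).filter (fun i : Fin n => (i:ℕ) < m) =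
      (Finset.univ : Finset (Fin m)).image (Fin.castLE h) := by
    ext i
    simp only [Finset.mem_filter, Finset.mem_univ, true_and, Finset.mem_image]
    constructor
    · intro hi; exact ⟨⟨i.1, hi⟩, rfl⟩
    · rintro ⟨j, rfl⟩; exact j.2
  rw [he, Finset.card_image_of_injective _ (Fin.castLE_injective h)]
  simp

/-- the sections of a blowup over an edge `E` -/
def secs {V : Type*} [DecidableEq V] (n : ℕ) (a : V → ℕ) (E : Finset V) :
    Finset (Finset (V × Fin n)) :=
  (E.pi (fun v => (Finset.univ.filter fun i : Fin n => (i:ℕ) < a v))).image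
    (fun g => E.attach.image (fun v => (v.1, g v.1 v.2)))

lemma secs_image_fst {V : Type*} [DecidableEq V] {n : ℕ} {a : V → ℕ} {E : Finset V}
    {S : Finset (V × Fin n)} (hS : S ∈ secs n a E) : S.image Prod.fst = E := by
  rcases Finset.mem_image.1 hS with ⟨g, -, rfl⟩
  rw [Finset.image_image]
  exact Finset.attach_image_val

lemma secs_card_edge {V : Type*} [DecidableEq V] {n : ℕ} {a : V → ℕ} {E : Finset V}
    {S : Finset (V × Fin n)} (hS : S ∈ secs n a E) : S.card = E.card := by
  rcases Finset.mem_image.1 hS with ⟨g, -, rfl⟩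
  rw [Finset.card_image_of_injective _ (fun v w hvw => Subtype.ext (congrArg Prod.fst hvw))]
  exact Finset.card_attach

lemma secs_mem_lt {V : Type*} [DecidableEq V] {n : ℕ} {a : V → ℕ} {E : Finset V}
    {S : Finset (V × Fin n)} (hS : S ∈ secs n a E) :
    ∀ p ∈ S, (p.2 : ℕ) < a p.1 := by
  rcases Finset.mem_image.1 hS with ⟨g, hg, rfl⟩
  intro p hp
  rcases Finset.mem_image.1 hp with ⟨v, -, rfl⟩
  have := Finset.mem_pi.1 hg v.1 v.2
  simpa using this

lemma secs_card {V : Type*} [DecidableEq V] {n : ℕ} {a : V → ℕ} (ha : ∀ v, a v ≤ n)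
    (E : Finset V) : (secs n a E).card = ∏ v ∈ E, a v := by
  rw [secs, Finset.card_image_of_injOn, Finset.card_pi]
  · exact Finset.prod_congr rfl fun v _ => card_filter_fin_lt (ha v)
  · intro g1 hg1 g2 hg2 himg
    funext v hv
    have himg' : E.attach.image (fun v => (v.1, g1 v.1 v.2)) =
        E.attach.image (fun v => (v.1, g2 v.1 v.2)) := himg
    have h1 : (v, g1 v hv) ∈ E.attach.image (fun w => (w.1, g2 w.1 w.2)) := by
      rw [← himg']
      exact Finset.mem_image_of_mem _ (Finset.mem_attach _ ⟨v, hv⟩)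
    rcases Finset.mem_image.1 h1 with ⟨w, -, hw⟩
    have h2 : w.1 = v := congrArg Prod.fst hw
    subst h2
    exact (congrArg Prod.snd hw).symm

lemma blowup_bound {V U : Type*} [Fintype V] [DecidableEq V] [Fintype U] [DecidableEq U]
    [Nonempty V] (r : ℕ) (F : Finset (Finset U)) (hFcard : ∀ E ∈ F, E.card = r)
    (hFcov : CoversPairs F)
    (G : Finset (Finset V)) (hGcard : ∀ E ∈ G, E.card = r)
    (hnoφ : ¬ ∃ φ : U ↪ V, ∀ E ∈ F, E.image φ ∈ G)
    (n : ℕ) (hn : 0 < n) (a : V → ℕ) (hsum : ∑ v, a v ≤ n) :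
    (∑ E ∈ G, ∏ v ∈ E, a v) ≤ exNum r F n := by
  classical
  have ha : ∀ v, a v ≤ n :=
    fun v => le_trans (Finset.single_le_sum (fun w _ => Nat.zero_le _) (mem_univ v)) hsum
  have hFinN : Nonempty (Fin n) := ⟨⟨0, hn⟩⟩
  -- the active vertex set
  set active : Finset (V × Fin n) :=
    Finset.univ.biUnion
      (fun v => ({v} : Finset V) ×ˢ (Finset.univ.filter fun i : Fin n => (i:ℕ) < a v))
    with hactive
  have mem_active : ∀ p : V × Fin n, p ∈ active ↔ (p.2 : ℕ) < a p.1 := by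
    intro p
    simp only [hactive, Finset.mem_biUnion, Finset.mem_univ, true_and, Finset.mem_product,
      Finset.mem_singleton, Finset.mem_filter]
    constructor
    · rintro ⟨v, h1, h⟩; rw [h1]; exact h
    · intro h; exact ⟨p.1, rfl, h⟩
  have card_active : active.card = ∑ v, a v := by
    rw [hactive, Finset.card_biUnion]
    · refine Finset.sum_congr rfl fun v _ => ?_
      rw [Finset.card_product, Finset.card_singleton, one_mul]
      exact card_filter_fin_lt (ha v)
    · intro v _ w _ hvw
      refine Finset.disjoint_left.2 fun p hp hq => hvw ?_
      rw [Finset.mem_product, Finset.mem_singleton] at hp hq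
      rw [← hp.1, hq.1]
  -- the blowup
  set B : Finset (Finset (V × Fin n)) := G.biUnion (secs n a) with hB
  have hBmem : ∀ S ∈ B, ∃ E ∈ G, S ∈ secs n a E := fun S hS => Finset.mem_biUnion.1 hS
  have hBsub : ∀ S ∈ B, ∀ p ∈ S, p ∈ active := by
    intro S hS p hp
    rcases hBmem S hS with ⟨E, -, hsec⟩
    exact (mem_active p).2 (secs_mem_lt hsec p hp)
  have hBcard : B.card = ∑ E ∈ G, ∏ v ∈ E, a v := by
    rw [hB, Finset.card_biUnion]
    · exact Finset.sum_congr rfl fun E _ => secs_card ha E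
    · intro E1 h1 E2 h2 h12
      refine Finset.disjoint_left.2 fun S hS1 hS2 => h12 ?_
      rw [← secs_image_fst hS1, secs_image_fst hS2]
  -- injection of the active set into `Fin n`
  have hcard : Fintype.card ↥(active : Finset (V × Fin n)) ≤ Fintype.card (Fin n) := by
    rw [Fintype.card_coe, Fintype.card_fin, card_active]
    exact hsum
  obtain ⟨emb⟩ := Function.Embedding.nonempty_of_card_le hcard
  set j : V × Fin n → Fin n := fun p => if h : p ∈ active then emb ⟨p, h⟩ else ⟨0, hn⟩ with hj
  have jInjOn : ∀ p ∈ active, ∀ q ∈ active, j p = j q → p = q := by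
    intro p hp q hq hpq
    rw [hj] at hpq
    simp only [dif_pos hp, dif_pos hq] at hpq
    exact congrArg Subtype.val (emb.injective hpq)
  set Gn : Finset (Finset (Fin n)) := B.image (Finset.image j) with hGn
  have hGncard : ∀ E' ∈ Gn, E'.card = r := by
    intro E' hE'
    rcases Finset.mem_image.1 hE' with ⟨S, hS, rfl⟩
    rcases hBmem S hS with ⟨E, hE, hsec⟩
    rw [Finset.card_image_of_injOn (fun p hp q hq => jInjOn p (hBsub S hS p hp) q (hBsub S hS q hq)),
      secs_card_edge hsec]
    exact hGcard E hE
  have himg_inj : ∀ S1 ∈ B, ∀ S2 ∈ B, S1.image j = S2.image j → S1 = S2 := by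
    have key : ∀ S1 ∈ B, ∀ S2 ∈ B, S1.image j = S2.image j → S1 ⊆ S2 := by
      intro S1 h1 S2 h2 h12 p hp
      have : j p ∈ S2.image j := h12 ▸ Finset.mem_image_of_mem j hp
      rcases Finset.mem_image.1 this with ⟨q, hq, hqp⟩
      rwa [← jInjOn q (hBsub S2 h2 q hq) p (hBsub S1 h1 p hp) hqp]
    exact fun S1 h1 S2 h2 h12 =>
      Finset.Subset.antisymm (key S1 h1 S2 h2 h12) (key S2 h2 S1 h1 h12.symm)
  have hGncardeq : Gn.card = B.card := Finset.card_image_of_injOn himg_inj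
  -- F-freeness
  have hfree : ¬ ContainsHCopy F Gn := by
    rintro ⟨f, hf⟩
    set jinv : Fin n → V × Fin n := fun x =>
      if h : ∃ p, p ∈ active ∧ j p = x then h.choose else Classical.arbitrary _ with hjinv
    have hjinv_spec : ∀ p ∈ active, jinv (j p) = p := by
      intro p hp
      have hex : ∃ q, q ∈ active ∧ j q = j p := ⟨p, hp, rfl⟩
      rw [hjinv]
      simp only [dif_pos hex]
      exact jInjOn _ hex.choose_spec.1 p hp hex.choose_spec.2
    set φ0 : U → V := fun u => (jinv (f u)).1 with hφ0
    have hedge : ∀ E ∈ F, E.image φ0 ∈ G := by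
      intro E hE
      rcases Finset.mem_image.1 (hf E hE) with ⟨S, hS, hSE⟩
      rcases hBmem S hS with ⟨E0, hE0, hsec⟩
      have h1 : (E.image f).image jinv = S := by
        rw [← hSE, Finset.image_image]
        refine Finset.image_congr (fun p hp => hjinv_spec p (hBsub S hS p hp)) |>.trans
          Finset.image_id
      have h2 : E.image φ0 = S.image Prod.fst := by
        rw [← h1, Finset.image_image, Finset.image_image]
        rfl
      rw [h2, secs_image_fst hsec]
      exact hE0
    have hinj : Function.Injective φ0 := by
      intro u v huv
      by_contra hne
      rcases hFcov u v hne with ⟨E, hE, hu, hv⟩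
      have hcard1 : (E.image φ0).card = E.card := by
        rw [hGcard _ (hedge E hE), hFcard E hE]
      have := Finset.injOn_of_card_image_eq hcard1
      exact hne (this hu hv huv)
    exact hnoφ ⟨⟨φ0, hinj⟩, hedge⟩
  -- conclude via exNum
  have hmem : Gn.card ∈ {m : ℕ | ∃ Gn' : Finset (Finset (Fin n)), (∀ E ∈ Gn', E.card = r) ∧
      ¬ ContainsHCopy F Gn' ∧ m = Gn'.card} := ⟨Gn, hGncard, hfree, rfl⟩
  have hbdd : BddAbove {m : ℕ | ∃ Gn' : Finset (Finset (Fin n)), (∀ E ∈ Gn', E.card = r) ∧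
      ¬ ContainsHCopy F Gn' ∧ m = Gn'.card} := by
    refine ⟨Fintype.card (Finset (Fin n)), ?_⟩
    rintro m ⟨Gn', -, -, rfl⟩
    exact Finset.card_le_univ _
  calc (∑ E ∈ G, ∏ v ∈ E, a v) = Gn.card := by rw [hGncardeq, hBcard]
  _ ≤ exNum r F n := le_csSup hbdd hmem

lemma tendsto_choose_div_pow (r : ℕ) :
    Tendsto (fun n : ℕ => (n.choose r : ℝ) / (n:ℝ)^r) atTop
      (nhds (1 / (r.factorial : ℝ))) := by
  have hlim : Tendsto (fun n : ℕ => (∏ i ∈ range r, (1 - (i:ℝ)/n)) / (r.factorial : ℝ))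
      atTop (nhds (1 / (r.factorial : ℝ))) := by
    have h1 : Tendsto (fun n : ℕ => ∏ i ∈ range r, (1 - (i:ℝ)/n)) atTop (nhds 1) := by
      have := tendsto_finset_prod (range r)
        (fun i (_ : i ∈ range r) => (tendsto_const_nhds (x := (1:ℝ))).sub
          (tendsto_const_div_atTop_nhds_zero_nat (i:ℝ)))
      simpa using this
    simpa using h1.div_const (r.factorial : ℝ)
  refine hlim.congr' ?_
  filter_upwards [eventually_ge_atTop (r+1)] with n hn
  have hn0 : (0:ℝ) < n := by
    have : 0 < n := by omega
    exact_mod_cast this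
  have hnat : (n.descFactorial r : ℝ) = (r.factorial : ℝ) * (n.choose r) := by
    exact_mod_cast congrArg (Nat.cast (R := ℝ)) (Nat.descFactorial_eq_factorial_mul_choose n r)
  have hfac0 : (0:ℝ) < (r.factorial : ℝ) := by exact_mod_cast r.factorial_pos
  have hc : (n.choose r : ℝ) = (n.descFactorial r : ℝ) / (r.factorial : ℝ) := by
    rw [hnat]; field_simp
  have hd : (n.descFactorial r : ℝ) = ∏ i ∈ range r, ((n:ℝ) - i) := by
    rw [Nat.descFactorial_eq_prod_range]
    push_cast [Nat.cast_prod]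
    refine Finset.prod_congr rfl fun i hi => ?_
    have : i ≤ n := le_trans (Nat.le_of_lt_succ (Nat.lt_succ_of_lt (mem_range.1 hi))) (by omega)
    push_cast [Nat.cast_sub this]
    ring
  have hprod : ∏ i ∈ range r, (1 - (i:ℝ)/n) = (∏ i ∈ range r, ((n:ℝ) - i)) / (n:ℝ)^r := by
    have : ∀ i ∈ range r, (1 - (i:ℝ)/n) = ((n:ℝ) - i) / n := by
      intro i _; field_simp
    rw [Finset.prod_congr rfl this, Finset.prod_div_distrib, Finset.prod_const, card_range]
  rw [hc, hd, hprod]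
  ring

lemma tendsto_floor_mul_div {c : ℝ} (hc : 0 ≤ c) :
    Tendsto (fun n : ℕ => ((⌊(n:ℝ) * c⌋₊ : ℝ) / n)) atTop (nhds c) := by
  refine tendsto_of_tendsto_of_tendsto_of_le_of_le'
    (g := fun n : ℕ => c - 1/(n:ℝ)) (h := fun _ : ℕ => c) ?_ tendsto_const_nhds ?_ ?_
  · simpa using (tendsto_const_nhds (x := c)).sub (tendsto_one_div_atTop_nhds_zero_nat)
  · filter_upwards [eventually_ge_atTop 1] with n hn
    have hn0 : (0:ℝ) < n := by exact_mod_cast hn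
    rw [sub_le_iff_le_add, ← add_div, le_div_iff₀ hn0]
    have h1 : (n:ℝ) * c - 1 < (⌊(n:ℝ) * c⌋₊ : ℝ) := Nat.sub_one_lt_floor _
    calc c * n = (n:ℝ) * c - 1 + 1 := by ring
    _ ≤ (⌊(n:ℝ) * c⌋₊ : ℝ) + 1 := by linarith
  · filter_upwards [eventually_ge_atTop 1] with n hn
    have hn0 : (0:ℝ) < n := by exact_mod_cast hn
    rw [div_le_iff₀ hn0]
    calc (⌊(n:ℝ) * c⌋₊ : ℝ) ≤ (n:ℝ) * c := Nat.floor_le (by positivity)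
    _ = c * n := by ring

/-- Let `F` be an `r`-graph covering pairs with at most `t` vertices and Turán density
`π(F) < r!·λ(K_t^(r)) = r!·t^(−r)·C(t,r)`. If `G` covers pairs, is `F^{+(t+1)}`-free,
and `λ(G) > max{λ*, π(F)/r!}`, then `G` is isomorphic to `K_t^(r)`. -/
theorem mubayi_gen_weight_stability {V U : Type*} [Fintype V] [DecidableEq V]
    [Fintype U] [DecidableEq U] (r t : ℕ) (hr : 2 ≤ r) (hrt : r ≤ t)
    (F : Finset (Finset U)) (hFcard : ∀ E ∈ F, E.card = r) (hFcov : CoversPairs F)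
    (hU : Fintype.card U ≤ t)
    (piF : ℝ)
    (hpi : Tendsto (fun n : ℕ => (exNum r F n : ℝ) / (n.choose r : ℝ)) atTop (nhds piF))
    (hpi_lt : piF < (r.factorial : ℝ) * ((t.choose r : ℝ) / (t : ℝ) ^ r))
    (G : Finset (Finset V)) (hGcard : ∀ E ∈ G, E.card = r) (hGcov : CoversPairs G)
    (hGfree : ¬ ContainsHCopy
      (F.image (Finset.image (Sum.inl : U → U ⊕ Fin (t + 1 - Fintype.card U)))) G)
    (hlam : max (lamStar t r) (piF / (r.factorial : ℝ)) < lagrangian G) :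
    ∃ e : V ≃ Fin t, ∀ E : Finset V,
      E ∈ G ↔ E.image e ∈ ((Finset.univ : Finset (Fin t)).powersetCard r) := by
  by_cases hVt : Fintype.card V ≤ t
  · exact caseA t r G hGcard hVt ((le_max_left _ _).trans_lt hlam)
  · exfalso
    have hVt' : t + 1 ≤ Fintype.card V := by omega
    haveI : Nonempty V := Fintype.card_pos_iff.1 (by omega)
    have hnoφ : ¬ ∃ φ : U ↪ V, ∀ E ∈ F, E.image φ ∈ G := by
      rintro ⟨φ, hφ⟩
      exact hGfree (extend_embedding t hU hVt' F G φ hφ)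
    have hfac0 : (0:ℝ) < (r.factorial : ℝ) := by exact_mod_cast r.factorial_pos
    have hpiF0 : 0 ≤ piF := ge_of_tendsto' hpi fun n => div_nonneg (Nat.cast_nonneg _) (Nat.cast_nonneg _)
    have hkey : ∀ μ : V → ℝ, IsProb μ → hDen G μ ≤ piF / (r.factorial : ℝ) := by
      intro μ hμ
      set a : ℕ → V → ℕ := fun n v => ⌊(n:ℝ) * μ v⌋₊ with ha
      have hsum : ∀ n : ℕ, ∑ v, a n v ≤ n := by
        intro n
        have h1 : ((∑ v, a n v : ℕ) : ℝ) ≤ (n:ℝ) := by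
          push_cast
          calc ∑ v, ((⌊(n:ℝ) * μ v⌋₊ : ℕ) : ℝ) ≤ ∑ v, (n:ℝ) * μ v :=
                Finset.sum_le_sum fun v _ => Nat.floor_le (mul_nonneg (Nat.cast_nonneg n) (hμ.1 v))
          _ = (n:ℝ) := by rw [← Finset.mul_sum, hμ.2, mul_one]
        exact_mod_cast h1
      have hineq : ∀ n : ℕ, 0 < n → (∑ E ∈ G, ∏ v ∈ E, a n v) ≤ exNum r F n :=
        fun n hn => blowup_bound r F hFcard hFcov G hGcard hnoφ n hn (a n) (hsum n)
      -- the two sequences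
      set Lf : ℕ → ℝ := fun n => (∑ E ∈ G, ∏ v ∈ E, ((a n v : ℝ)/(n:ℝ))) * (r.factorial : ℝ)
        with hLf
      set Rf : ℕ → ℝ :=
        fun n => (exNum r F n : ℝ) / (n.choose r : ℝ) * ((n.choose r : ℝ)/(n:ℝ)^r)
          * (r.factorial : ℝ) with hRf
      have hLtend : Tendsto Lf atTop (nhds (hDen G μ * (r.factorial : ℝ))) := by
        refine Tendsto.mul_const _ ?_
        unfold hDen
        refine tendsto_finset_sum _ fun E _ => ?_
        exact tendsto_finset_prod _ fun v _ => tendsto_floor_mul_div (hμ.1 v)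
      have hRtend : Tendsto Rf atTop
          (nhds (piF * (1 / (r.factorial : ℝ)) * (r.factorial : ℝ))) :=
        (hpi.mul (tendsto_choose_div_pow r)).mul_const _
      have hle : hDen G μ * (r.factorial : ℝ) ≤ piF * (1 / (r.factorial : ℝ))
          * (r.factorial : ℝ) := by
        refine le_of_tendsto_of_tendsto hLtend hRtend ?_
        filter_upwards [eventually_ge_atTop (max r 1)] with n hn
        have hnr : r ≤ n := le_trans (le_max_left _ _) hn
        have hn1 : 0 < n := lt_of_lt_of_le (by norm_num) (le_trans (le_max_right _ _) hn)
        have hn0 : (0:ℝ) < (n:ℝ) := by exact_mod_cast hn1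
        have hch : (0:ℝ) < (n.choose r : ℝ) := by exact_mod_cast Nat.choose_pos hnr
        have hpow : (0:ℝ) < (n:ℝ)^r := by positivity
        have hsums : (∑ E ∈ G, ∏ v ∈ E, ((a n v : ℝ)/(n:ℝ)))
            = ((∑ E ∈ G, ∏ v ∈ E, a n v : ℕ) : ℝ) / (n:ℝ)^r := by
          push_cast
          rw [Finset.sum_div]
          refine Finset.sum_congr rfl fun E hE => ?_
          rw [Finset.prod_div_distrib, Finset.prod_const, hGcard E hE]
        have hReq : Rf n = (exNum r F n : ℝ) / (n:ℝ)^r * (r.factorial : ℝ) := by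
          rw [hRf]
          field_simp
        rw [hReq]
        show (∑ E ∈ G, ∏ v ∈ E, ((a n v : ℝ)/(n:ℝ))) * (r.factorial : ℝ) ≤ _
        rw [hsums]
        have hcast : ((∑ E ∈ G, ∏ v ∈ E, a n v : ℕ) : ℝ) ≤ (exNum r F n : ℝ) := by
          exact_mod_cast hineq n hn1
        gcongr
      have h2 : hDen G μ ≤ piF * (1 / (r.factorial : ℝ)) :=
        le_of_mul_le_mul_right hle hfac0
      calc hDen G μ ≤ piF * (1 / (r.factorial : ℝ)) := h2
      _ = piF / (r.factorial : ℝ) := by ring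
    have hlag : lagrangian G ≤ piF / (r.factorial : ℝ) :=
      lagrangian_le (by positivity) hkey
    exact absurd hlag (not_le.2 ((le_max_right _ _).trans_lt hlam))
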